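/- Let P be a linear partial profile over C and let c be a candidate. Define the completion A* of P as follows: for each voter v, if c ∈ Top(v) ∪ Bottom(v) then A*(v) = Top(v) ∪ Middle(v); otherwise c ∈ Middle(v), say c is the j-th candidate in the linear order on Middle(v), and A*(v) = Top(v) ∪ {the first j−1 candidates of the order}. Then c is a necessary committee member of size k under Approval Voting (i.e., every completion of P has a winning committee of size k containing c) if and only if c belongs to some winning committee of size k under Approval Voting in A*. -/

import Mathlib

open Finset

variable {V C : Type*}

/-- The Approval Voting (AV) score of a set `S` under approval profile `A`,
i.e. the `w`-Thiele score with `w x = x`. -/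
def avScore [Fintype V] [DecidableEq C] (A : V → Finset C) (S : Finset C) : ℚ :=
  ∑ v, ((S ∩ A v).card : ℚ)

/-- `W` is a winning committee of size `k` under Approval Voting in `A`. -/
def IsWinningAV [Fintype V] [DecidableEq C] (k : ℕ) (A : V → Finset C) (W : Finset C) : Prop :=
  W.card = k ∧ ∀ W' : Finset C, W'.card = k → avScore A W' ≤ avScore A W

/-- `A` is a completion of the linear partial profile given by `Top` and the
linear orders `ord` on the middle candidates: each voter approves `Top v`
together with a prefix of `ord v`. -/
def IsLinCompletion [DecidableEq C] (Top : V → Finset C) (ord : V → List C)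
    (A : V → Finset C) : Prop :=
  ∀ v, ∃ j, A v = Top v ∪ ((ord v).take j).toFinset

/-- Approval score of a single candidate. -/
def appr [Fintype V] [DecidableEq C] (A : V → Finset C) (x : C) : ℚ :=
  ∑ v, if x ∈ A v then (1 : ℚ) else 0

lemma avScore_eq_sum_appr [Fintype V] [DecidableEq C] (A : V → Finset C) (W : Finset C) :
    avScore A W = ∑ x ∈ W, appr A x := by
  unfold avScore appr
  rw [Finset.sum_comm]
  refine Finset.sum_congr rfl fun v _ => ?_
  rw [show W ∩ A v = W.filter (· ∈ A v) by ext x; simp [and_comm]]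
  rw [Finset.card_filter]
  push_cast
  simp

lemma ite_sub_helper {p q r s : Prop} [Decidable p] [Decidable q] [Decidable r] [Decidable s]
    (hpr : p → r) (hqs : q ↔ s) :
    (if p then (1 : ℚ) else 0) - (if q then 1 else 0) ≤
      (if r then 1 else 0) - (if s then 1 else 0) := by
  split_ifs with h1 h2 h3 h4 <;> simp_all

theorem stmt14 [Fintype V] [Fintype C] [DecidableEq C]
    (k : ℕ)
    (Top Mid Bot : V → Finset C)
    (hpart : ∀ v, Top v ∪ Mid v ∪ Bot v = Finset.univ)
    (hTM : ∀ v, Disjoint (Top v) (Mid v)) (hTB : ∀ v, Disjoint (Top v) (Bot v))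
    (hMB : ∀ v, Disjoint (Mid v) (Bot v))
    (ord : V → List C) (hnd : ∀ v, (ord v).Nodup) (hordM : ∀ v, (ord v).toFinset = Mid v)
    (c : C) :
    (∀ A : V → Finset C, IsLinCompletion Top ord A →
        ∃ W : Finset C, c ∈ W ∧ IsWinningAV k A W) ↔
    (∃ W : Finset C, c ∈ W ∧ IsWinningAV k
        (fun v => if c ∈ Top v ∪ Bot v then Top v ∪ Mid v
          else Top v ∪ ((ord v).take ((ord v).idxOf c)).toFinset) W) := by
  classical
  set Astar : V → Finset C := fun v => if c ∈ Top v ∪ Bot v then Top v ∪ Mid v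
      else Top v ∪ ((ord v).take ((ord v).idxOf c)).toFinset with hAstar
  have hAspos : ∀ v, c ∈ Top v ∪ Bot v → Astar v = Top v ∪ Mid v := by
    intro v h; simp only [hAstar]; rw [if_pos h]
  have hAsneg : ∀ v, c ∉ Top v ∪ Bot v →
      Astar v = Top v ∪ ((ord v).take ((ord v).idxOf c)).toFinset := by
    intro v h; simp only [hAstar]; rw [if_neg h]
  have hcomp : IsLinCompletion Top ord Astar := by
    intro v
    by_cases h : c ∈ Top v ∪ Bot v
    · exact ⟨(ord v).length, by rw [hAspos v h, List.take_length, hordM v]⟩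
    · exact ⟨(ord v).idxOf c, hAsneg v h⟩
  constructor
  · intro hall
    exact hall Astar hcomp
  · rintro ⟨Ws, hcWs, hWscard, hWswin⟩ A hA
    -- key pointwise comparison
    have key : ∀ d, appr A d - appr A c ≤ appr Astar d - appr Astar c := by
      intro d
      unfold appr
      rw [← Finset.sum_sub_distrib, ← Finset.sum_sub_distrib]
      apply Finset.sum_le_sum
      intro v _
      obtain ⟨j, hj⟩ := hA v
      have hMidv : (ord v).toFinset = Mid v := hordM v
      by_cases hc : c ∈ Top v ∪ Bot v
      · have hAs : Astar v = Top v ∪ Mid v := hAspos v hc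
        have hsub : A v ⊆ Astar v := by
          rw [hj, hAs]
          apply Finset.union_subset_union_right
          intro x hx
          rw [← hMidv]
          simp only [List.mem_toFinset] at hx ⊢
          exact List.take_subset _ _ hx
        have hcc : c ∈ A v ↔ c ∈ Astar v := by
          rcases Finset.mem_union.mp hc with hT | hB
          · constructor
            · intro _; rw [hAs]; exact Finset.mem_union_left _ hT
            · intro _; rw [hj]; exact Finset.mem_union_left _ hT
          · have h1 : c ∉ Top v := fun h => Finset.disjoint_left.mp (hTB v) h hB
            have h2 : c ∉ Mid v := fun h => Finset.disjoint_right.mp (hMB v) hB h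
            constructor
            · intro h
              exfalso
              rw [hj] at h
              rcases Finset.mem_union.mp h with h | h
              · exact h1 h
              · apply h2
                rw [← hMidv, List.mem_toFinset]
                exact List.take_subset _ _ (List.mem_toFinset.mp h)
            · intro h
              exfalso
              rw [hAs] at h
              rcases Finset.mem_union.mp h with h | h
              · exact h1 h
              · exact h2 h
        exact ite_sub_helper (fun h => hsub h) hcc
      · -- c is a middle candidate of v
        have hcM : c ∈ Mid v := by
          have hcu : c ∈ Top v ∪ Mid v ∪ Bot v := by rw [hpart v]; exact Finset.mem_univ c
          rcases Finset.mem_union.mp hcu with h | h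
          · rcases Finset.mem_union.mp h with h | h
            · exact absurd (Finset.mem_union_left _ h) hc
            · exact h
          · exact absurd (Finset.mem_union_right _ h) hc
        have hcord : c ∈ ord v := by
          rw [← List.mem_toFinset, hMidv]; exact hcM
        have hAs : Astar v = Top v ∪ ((ord v).take ((ord v).idxOf c)).toFinset :=
          hAsneg v hc
        have hcT : c ∉ Top v := fun h => Finset.disjoint_left.mp (hTM v) h hcM
        have hcstar : c ∉ Astar v := by
          rw [hAs]
          intro h
          rcases Finset.mem_union.mp h with h | h
          · exact hcT h
          · rw [List.mem_toFinset, List.mem_take_iff_getElem] at h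
            obtain ⟨i, hi, hic⟩ := h
            have hile : i < (ord v).idxOf c := lt_of_lt_of_le hi (by omega)
            have : (ord v).idxOf c ≤ i := by
              have := List.Nodup.idxOf_getElem (hnd v) i (by omega)
              rw [hic] at this
              omega
            omega
        by_cases hcav : c ∈ A v
        · simp only [hcav, hcstar, if_true, if_false]
          have h1 : (if d ∈ A v then (1:ℚ) else 0) ≤ 1 := by split_ifs <;> norm_num
          have h2 : (0:ℚ) ≤ if d ∈ Astar v then 1 else 0 := by split_ifs <;> norm_num
          linarith
        · have hjle : j ≤ (ord v).idxOf c := by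
            by_contra hlt
            push_neg at hlt
            apply hcav
            rw [hj]
            apply Finset.mem_union_right
            rw [List.mem_toFinset, List.mem_take_iff_getElem]
            have hlen : (ord v).idxOf c < (ord v).length := List.idxOf_lt_length_iff.mpr hcord
            exact ⟨(ord v).idxOf c, by omega, List.getElem_idxOf hlen⟩
          have hsub : A v ⊆ Astar v := by
            rw [hj, hAs]
            apply Finset.union_subset_union_right
            intro x hx
            rw [List.mem_toFinset] at hx ⊢
            have : (ord v).take j = ((ord v).take ((ord v).idxOf c)).take j := by
              rw [List.take_take, Nat.min_eq_left hjle]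
            rw [this] at hx
            exact List.take_subset _ _ hx
          exact ite_sub_helper (fun h => hsub h) (by simp [hcav, hcstar])
    -- existence of a winning committee for A
    have hk1 : 1 ≤ k := by
      rw [← hWscard]
      exact Finset.card_pos.mpr ⟨c, hcWs⟩
    have hkle : k ≤ Fintype.card C := by
      rw [← hWscard, ← Finset.card_univ]
      exact Finset.card_le_card (Finset.subset_univ Ws)
    obtain ⟨W0, hW0mem, hW0max⟩ :
        ∃ W0 ∈ Finset.powersetCard k (Finset.univ : Finset C),
          ∀ W' ∈ Finset.powersetCard k (Finset.univ : Finset C),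
            avScore A W' ≤ avScore A W0 := by
      apply Finset.exists_max_image
      obtain ⟨t, _, ht⟩ := Finset.exists_subset_card_eq
        (show k ≤ (Finset.univ : Finset C).card by rwa [Finset.card_univ])
      exact ⟨t, Finset.mem_powersetCard.mpr ⟨Finset.subset_univ t, ht⟩⟩
    have hW0card : W0.card = k := (Finset.mem_powersetCard.mp hW0mem).2
    have hW0win : IsWinningAV k A W0 :=
      ⟨hW0card, fun W' hW' => hW0max W'
        (Finset.mem_powersetCard.mpr ⟨Finset.subset_univ _, hW'⟩)⟩
    by_cases hcW0 : c ∈ W0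
    · exact ⟨W0, hcW0, hW0win⟩
    · have hW0ne : W0.Nonempty := by
        rw [← Finset.card_pos, hW0card]; omega
      obtain ⟨d, hdW0, hdmin⟩ := Finset.exists_min_image W0 (appr A) hW0ne
      have hcd : appr A d ≤ appr A c := by
        by_contra hlt
        push_neg at hlt
        have hex : ∃ e ∈ W0, e ∉ Ws := by
          by_contra h
          push_neg at h
          have : W0 = Ws := Finset.eq_of_subset_of_card_le h (by rw [hW0card, hWscard])
          exact hcW0 (this ▸ hcWs)
        obtain ⟨e, heW0, heWs⟩ := hex
        have h1 : appr A c < appr A e := lt_of_lt_of_le hlt (hdmin e heW0)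
        have h2 : appr Astar c < appr Astar e := by
          have := key e; linarith
        set W' := insert e (Ws.erase c) with hW'
        have hW'card : W'.card = k := by
          rw [hW', Finset.card_insert_of_notMem (fun h => heWs (Finset.mem_of_mem_erase h)),
            Finset.card_erase_of_mem hcWs, hWscard]
          omega
        have hscore : avScore Astar Ws < avScore Astar W' := by
          rw [avScore_eq_sum_appr, avScore_eq_sum_appr, hW',
            Finset.sum_insert (fun h => heWs (Finset.mem_of_mem_erase h)),
            Finset.sum_erase_eq_sub hcWs]
          linarith
        exact absurd (hWswin W' hW'card) (not_le.mpr hscore)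
      have hcerase : c ∉ W0.erase d := fun h => hcW0 (Finset.mem_of_mem_erase h)
      refine ⟨insert c (W0.erase d), Finset.mem_insert_self c _, ?_, ?_⟩
      · rw [Finset.card_insert_of_notMem hcerase, Finset.card_erase_of_mem hdW0, hW0card]
        omega
      · intro W' hW'
        have hle : avScore A W' ≤ avScore A W0 := hW0win.2 W' hW'
        have : avScore A W0 ≤ avScore A (insert c (W0.erase d)) := by
          rw [avScore_eq_sum_appr, avScore_eq_sum_appr,
            Finset.sum_insert hcerase, Finset.sum_erase_eq_sub hdW0]
          linarith
        linarith
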